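/- For even r ≥ 4, the k-tuple graph of the 6-cycle C6 obtained by replacing each vertex of one part by k = r/2 copies is a bipartite biregular graph of degrees (2, r) and diameter 3 on 3(1 + r/2) vertices, attaining the Moore bound M(r,2;3) = 3(1 + r/2). -/

import Mathlib

/-- The bipartite graph on parts `A` and `B` determined by the relation `R`. -/
def bipGraph {A B : Type*} (R : A → B → Prop) : SimpleGraph (A ⊕ B) where
  Adj x y :=
    match x, y with
    | Sum.inl a, Sum.inr b => R a b
    | Sum.inr b, Sum.inl a => R a b
    | _, _ => False
  symm := by constructor; rintro (a | b) (a' | b') h <;> simp_all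
  loopless := by constructor; rintro (a | b) h <;> simp_all

/-- The `k`-tuple graph `G^{kV1}` of the bipartite graph determined by `R`:
every vertex of the part `A` is replaced by `k` copies with the same neighborhood. -/
def bipTupleGraph {A B : Type*} (R : A → B → Prop) (k : ℕ) :
    SimpleGraph ((A × Fin k) ⊕ B) where
  Adj x y :=
    match x, y with
    | Sum.inl a, Sum.inr b => R a.1 b
    | Sum.inr b, Sum.inl a => R a.1 b
    | _, _ => False
  symm := by constructor; rintro (a | b) (a' | b') h <;> simp_all
  loopless := by constructor; rintro (a | b) h <;> simp_all

lemma bipTuple_edist_ne_two {A B : Type*} (R : A → B → Prop) (k : ℕ)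
    (x : A × Fin k) (b : B) :
    (bipTupleGraph R k).edist (Sum.inl x) (Sum.inr b) ≠ 2 := by
  intro h
  obtain ⟨p, hp⟩ := SimpleGraph.exists_walk_of_edist_eq_coe (k := 2) (by exact_mod_cast h)
  cases p with
  | cons h1 q =>
    rename_i w
    cases q with
    | nil => simp at hp
    | cons h2 q' =>
      cases q' with
      | nil =>
        rcases w with y | c
        · exact h1
        · exact h2
      | cons h3 q'' =>
        simp only [SimpleGraph.Walk.length_cons] at hp
        omega

theorem stmt_18 (r : ℕ) (hr : 4 ≤ r) (heven : Even r) :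
    (∀ b : ZMod 3,
      ((bipTupleGraph (fun (a b : ZMod 3) => b = a ∨ b = a + 1) (r / 2)).neighborSet
        (Sum.inr b)).ncard = r) ∧
    (∀ a : ZMod 3 × Fin (r / 2),
      ((bipTupleGraph (fun (a b : ZMod 3) => b = a ∨ b = a + 1) (r / 2)).neighborSet
        (Sum.inl a)).ncard = 2) ∧
    (bipTupleGraph (fun (a b : ZMod 3) => b = a ∨ b = a + 1) (r / 2)).diam = 3 ∧
    Fintype.card ((ZMod 3 × Fin (r / 2)) ⊕ ZMod 3) = 3 * (1 + r / 2) := by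
  set k := r / 2 with hk
  have hk2 : 2 ≤ k := by omega
  set R : ZMod 3 → ZMod 3 → Prop := fun a b => b = a ∨ b = a + 1 with hR
  set G := bipTupleGraph R k with hG
  have hadj_lr : ∀ (a : ZMod 3 × Fin k) (b : ZMod 3), G.Adj (Sum.inl a) (Sum.inr b) ↔ R a.1 b :=
    fun a b => Iff.rfl
  have hadj_rl : ∀ (a : ZMod 3 × Fin k) (b : ZMod 3), G.Adj (Sum.inr b) (Sum.inl a) ↔ R a.1 b :=
    fun a b => Iff.rfl
  refine ⟨?_, ?_, ?_, ?_⟩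
  · -- degree of B-vertices is r
    intro b
    have hset : G.neighborSet (Sum.inr b) =
        ↑((({b, b - 1} : Finset (ZMod 3)) ×ˢ (Finset.univ : Finset (Fin k))).image
          (Sum.inl : ZMod 3 × Fin k → ZMod 3 × Fin k ⊕ ZMod 3)) := by
      ext x
      rcases x with a | c
      · simp only [SimpleGraph.mem_neighborSet, Finset.coe_image, Set.mem_image,
          Finset.mem_coe, Finset.mem_product, Finset.mem_insert, Finset.mem_singleton,
          Finset.mem_univ, and_true]
        constructor
        · intro h
          refine ⟨a, ?_, rfl⟩
          have h' : R a.1 b := (hadj_rl a b).mp h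
          rcases h' with h' | h'
          · exact Or.inl h'.symm
          · right
            rw [h']
            ring
        · rintro ⟨a', ha', hinj⟩
          obtain rfl := Sum.inl_injective hinj
          refine (hadj_rl a' b).mpr ?_
          rcases ha' with h' | h'
          · exact Or.inl h'.symm
          · right
            rw [h']
            ring
      · constructor
        · intro h
          exact absurd h (by exact fun h => h)
        · intro h
          simp at h
    rw [hset, Set.ncard_coe_finset, Finset.card_image_of_injective _ Sum.inl_injective,
      Finset.card_product]
    have hb : ({b, b - 1} : Finset (ZMod 3)).card = 2 := by
      rw [Finset.card_insert_of_notMem (by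
        simp only [Finset.mem_singleton]
        exact (by decide : ∀ b : ZMod 3, ¬ b = b - 1) b), Finset.card_singleton]
    rw [hb]
    simp only [Finset.card_univ, Fintype.card_fin]
    have := Nat.two_mul_div_two_of_even heven
    omega
  · -- degree of A-vertices is 2
    intro a
    have hset : G.neighborSet (Sum.inl a) = {Sum.inr a.1, Sum.inr (a.1 + 1)} := by
      ext x
      rcases x with a' | c
      · constructor
        · intro h; exact absurd h (fun h => h)
        · intro h; simp at h
      · simp only [SimpleGraph.mem_neighborSet, Set.mem_insert_iff, Set.mem_singleton_iff,
          Sum.inr.injEq]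
        exact hadj_lr a c
    rw [hset, Set.ncard_pair (by
      simp only [ne_eq, Sum.inr.injEq]
      intro h
      exact (by decide : ∀ a : ZMod 3, ¬ a = a + 1) a.1 h)]
  · -- diameter = 3
    have i0 : Fin k := ⟨0, by omega⟩
    have hub : G.ediam ≤ 3 := by
      apply SimpleGraph.ediam_le_of_edist_le
      rintro (x | b) (y | c)
      · obtain ⟨b, hb1, hb2⟩ :=
          (by decide : ∀ a a' : ZMod 3, ∃ b, (b = a ∨ b = a + 1) ∧ (b = a' ∨ b = a' + 1))
          x.1 y.1
        let p : G.Walk (Sum.inl x) (Sum.inl y) :=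
          SimpleGraph.Walk.cons ((hadj_lr x b).mpr hb1)
            (SimpleGraph.Walk.cons ((hadj_rl y b).mpr hb2) SimpleGraph.Walk.nil)
        calc G.edist _ _ ≤ p.length := SimpleGraph.edist_le p
          _ ≤ 3 := by rw [show p.length = 2 from rfl]; norm_num
      · obtain ⟨u, v, h1, h2, h3⟩ :=
          (by decide : ∀ a b : ZMod 3, ∃ u v, (u = a ∨ u = a + 1) ∧ (u = v ∨ u = v + 1) ∧
            (b = v ∨ b = v + 1)) x.1 c
        let p : G.Walk (Sum.inl x) (Sum.inr c) :=
          SimpleGraph.Walk.cons ((hadj_lr x u).mpr h1)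
            (SimpleGraph.Walk.cons ((hadj_rl (v, x.2) u).mpr h2)
              (SimpleGraph.Walk.cons ((hadj_lr (v, x.2) c).mpr h3) SimpleGraph.Walk.nil))
        calc G.edist _ _ ≤ p.length := SimpleGraph.edist_le p
          _ ≤ 3 := by rw [show p.length = 3 from rfl]; norm_num
      · obtain ⟨u, v, h1, h2, h3⟩ :=
          (by decide : ∀ a b : ZMod 3, ∃ u v, (u = a ∨ u = a + 1) ∧ (u = v ∨ u = v + 1) ∧
            (b = v ∨ b = v + 1)) y.1 b
        let p : G.Walk (Sum.inr b) (Sum.inl y) :=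
          SimpleGraph.Walk.cons ((hadj_rl (v, y.2) b).mpr h3)
            (SimpleGraph.Walk.cons ((hadj_lr (v, y.2) u).mpr h2)
              (SimpleGraph.Walk.cons ((hadj_rl y u).mpr h1) SimpleGraph.Walk.nil))
        calc G.edist _ _ ≤ p.length := SimpleGraph.edist_le p
          _ ≤ 3 := by rw [show p.length = 3 from rfl]; norm_num
      · obtain ⟨a, h1, h2⟩ :=
          (by decide : ∀ b b' : ZMod 3, ∃ a, (b = a ∨ b = a + 1) ∧ (b' = a ∨ b' = a + 1)) b c
        let p : G.Walk (Sum.inr b) (Sum.inr c) :=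
          SimpleGraph.Walk.cons ((hadj_rl (a, i0) b).mpr h1)
            (SimpleGraph.Walk.cons ((hadj_lr (a, i0) c).mpr h2) SimpleGraph.Walk.nil)
        calc G.edist _ _ ≤ p.length := SimpleGraph.edist_le p
          _ ≤ 3 := by rw [show p.length = 2 from rfl]; norm_num
    have hlow : G.edist (Sum.inl ((0 : ZMod 3), i0)) (Sum.inr (2 : ZMod 3)) = 3 := by
      have hle : G.edist (Sum.inl ((0 : ZMod 3), i0)) (Sum.inr (2 : ZMod 3)) ≤ 3 :=
        le_trans SimpleGraph.edist_le_ediam hub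
      have h0 : G.edist (Sum.inl ((0 : ZMod 3), i0)) (Sum.inr (2 : ZMod 3)) ≠ 0 := by
        simp only [ne_eq, SimpleGraph.edist_eq_zero_iff]
        simp
      have h1 : G.edist (Sum.inl ((0 : ZMod 3), i0)) (Sum.inr (2 : ZMod 3)) ≠ 1 := by
        simp only [ne_eq, SimpleGraph.edist_eq_one_iff_adj]
        intro h
        exact (by decide : ¬ ((2 : ZMod 3) = 0 ∨ (2 : ZMod 3) = 0 + 1))
          ((hadj_lr ((0 : ZMod 3), i0) 2).mp h)
      have h2 : G.edist (Sum.inl ((0 : ZMod 3), i0)) (Sum.inr (2 : ZMod 3)) ≠ 2 :=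
        bipTuple_edist_ne_two R k ((0 : ZMod 3), i0) (2 : ZMod 3)
      have hne : G.edist (Sum.inl ((0 : ZMod 3), i0)) (Sum.inr (2 : ZMod 3)) ≠ ⊤ :=
        fun h => by rw [h] at hle; exact absurd hle (by norm_num)
      lift G.edist (Sum.inl ((0 : ZMod 3), i0)) (Sum.inr (2 : ZMod 3)) to ℕ using hne
        with n hn
      have hle' : n ≤ 3 := by exact_mod_cast hle
      have h0' : n ≠ 0 := by exact_mod_cast h0
      have h1' : n ≠ 1 := by exact_mod_cast h1
      have h2' : n ≠ 2 := by exact_mod_cast h2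
      norm_cast
      omega
    have hediam : G.ediam = 3 :=
      le_antisymm hub (hlow ▸ SimpleGraph.edist_le_ediam)
    rw [SimpleGraph.diam, hediam]
    rfl
  · -- vertex count
    simp only [Fintype.card_sum, Fintype.card_prod, Fintype.card_fin]
    have : Fintype.card (ZMod 3) = 3 := rfl
    rw [this]
    ring
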